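/- Let b > 0, let β ∈ (−1,0), and let f ∈ C²[0,b] (in particular this covers the case f′(0) ≠ 0). Then there exists K > 0 such that for every N ∈ ℕ with N ≥ 1, the modified midpoint quadrature error (with a = 0) satisfies |E_N| ≤ K/N^{2+β}. -/

import Mathlib

open Filter MeasureTheory Set
open intervalIntegral
open scoped Interval
set_option maxHeartbeats 1000000

lemma abs_sub_le_of_uIcc' {m x t : ℝ} (ht : t ∈ Set.uIcc m x) : |t - m| ≤ |x - m| := by
  rcases le_total m x with h | h
  · rw [uIcc_of_le h] at ht
    rw [abs_of_nonneg (by linarith [ht.1]), abs_of_nonneg (by linarith)]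
    linarith [ht.2]
  · rw [uIcc_of_ge h] at ht
    rw [abs_of_nonpos (by linarith [ht.2]), abs_of_nonpos (by linarith)]
    linarith [ht.1]

lemma taylor2_bound' {f g g2 : ℝ → ℝ} {s : Set ℝ} (hs : Convex ℝ s)
    (hfg : ∀ x ∈ s, HasDerivWithinAt f (g x) s x)
    (hgg2 : ∀ x ∈ s, HasDerivWithinAt g (g2 x) s x)
    {M : ℝ} (hM : ∀ x ∈ s, |g2 x| ≤ M)
    {m x : ℝ} (hm : m ∈ s) (hx : x ∈ s) :
    |f x - f m - g m * (x - m)| ≤ M * |x - m| * |x - m| := by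
  have lip : ∀ t ∈ s, |g t - g m| ≤ M * |t - m| := by
    intro t ht
    simpa [Real.norm_eq_abs] using
      hs.norm_image_sub_le_of_norm_hasDerivWithin_le hgg2
        (fun y hy => by simpa [Real.norm_eq_abs] using hM y hy) hm ht
  set s' : Set ℝ := Set.uIcc m x with hs'
  have hsub : s' ⊆ s := by
    rw [hs', ← segment_eq_uIcc]
    exact hs.segment_subset hm hx
  set φ : ℝ → ℝ := fun t => f t - f m - g m * (t - m) with hφ
  have hφd : ∀ t ∈ s', HasDerivWithinAt φ (g t - g m) s' t := by
    intro t ht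
    have h1 : HasDerivWithinAt (fun t : ℝ => g m * (t - m)) (g m) s' t := by
      simpa using ((hasDerivWithinAt_id t s').sub_const m).const_mul (g m)
    exact (((hfg t (hsub ht)).mono hsub).sub_const (f m)).sub h1
  have hbd : ∀ t ∈ s', |g t - g m| ≤ M * |x - m| := by
    intro t ht
    refine (lip t (hsub ht)).trans ?_
    have hM0 : 0 ≤ M := (abs_nonneg _).trans (hM m hm)
    exact mul_le_mul_of_nonneg_left (abs_sub_le_of_uIcc' ht) hM0
  have := Convex.norm_image_sub_le_of_norm_hasDerivWithin_le hφd
    (fun t ht => by simpa [Real.norm_eq_abs] using hbd t ht) (convex_uIcc m x)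
    (left_mem_uIcc) (right_mem_uIcc)
  simpa [hφ, Real.norm_eq_abs] using this

lemma key_bound (b β h : ℝ) (hb : 0 < b) (hβl : -1 < β) (hβu : β < 0) (hh : 0 < h)
    (f g g2 : ℝ → ℝ)
    (hfd : ∀ x ∈ Set.Icc (0:ℝ) b, HasDerivWithinAt f (g x) (Set.Icc 0 b) x)
    (hgd : ∀ x ∈ Set.Icc (0:ℝ) b, HasDerivWithinAt g (g2 x) (Set.Icc 0 b) x)
    (M₁ M₂ : ℝ) (hM₁ : ∀ x ∈ Set.Icc (0:ℝ) b, |g x| ≤ M₁)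
    (hM₂ : ∀ x ∈ Set.Icc (0:ℝ) b, |g2 x| ≤ M₂)
    (n : ℕ) (hv : ((n:ℝ)+1) * h ≤ b) :
    |(∫ x in ((n:ℝ)*h)..(((n:ℝ)+1)*h), x ^ β * f x) -
      ((((n:ℝ)+1)*h) ^ (β+1) - ((n:ℝ)*h) ^ (β+1)) / (β+1) * f (((n:ℝ)+1/2)*h)|
    ≤ M₂ * (h^2/4) * ((((((n:ℝ)+1)*h) ^ (β+1) - ((n:ℝ)*h) ^ (β+1))) / (β+1))
      + M₁ * (if n = 0 then h^(β+2)/(2*(β+1)) else |β| * h^(β+2) * (n:ℝ)^(β-1)/4) := by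
  have hβ1 : 0 < β + 1 := by linarith
  have hM₁0 : 0 ≤ M₁ := (abs_nonneg _).trans (hM₁ 0 ⟨le_refl 0, hb.le⟩)
  have hM₂0 : 0 ≤ M₂ := (abs_nonneg _).trans (hM₂ 0 ⟨le_refl 0, hb.le⟩)
  set u : ℝ := (n:ℝ)*h with hudef
  set v : ℝ := ((n:ℝ)+1)*h with hvdef
  set m : ℝ := ((n:ℝ)+1/2)*h with hmdef
  have hu0 : 0 ≤ u := by positivity
  have hvu : v - u = h := by rw [hudef, hvdef]; ring
  have huv : u < v := by linarith
  have hum : u = m - h/2 := by rw [hudef, hmdef]; ring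
  have hvm : v = m + h/2 := by rw [hvdef, hmdef]; ring
  have hus : u ∈ Set.Icc (0:ℝ) b := ⟨hu0, by linarith⟩
  have hvs : v ∈ Set.Icc (0:ℝ) b := ⟨by linarith, hv⟩
  have hms : m ∈ Set.Icc (0:ℝ) b := ⟨by nlinarith, by nlinarith⟩
  have hIccs : Set.Icc u v ⊆ Set.Icc (0:ℝ) b := Set.Icc_subset_Icc hu0 hv
  have hmuv : m ∈ Set.Icc u v := ⟨by linarith, by linarith⟩
  have hdist : ∀ x ∈ Set.Icc u v, |x - m| ≤ h/2 := by
    intro x hx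
    exact abs_le.mpr ⟨by linarith [hx.1], by linarith [hx.2]⟩
  set c : ℝ := (v ^ (β+1) - u ^ (β+1)) / (β+1) with hcdef
  have hc : c = ∫ x in u..v, x ^ β := by
    rw [hcdef, integral_rpow (Or.inl hβl)]
  have hcnn : 0 ≤ c := by
    rw [hcdef]
    exact div_nonneg (sub_nonneg.mpr (Real.rpow_le_rpow hu0 huv.le hβ1.le)) hβ1.le
  set R : ℝ → ℝ := fun x => f x - f m - g m * (x - m) with hRdef
  have hRb : ∀ x ∈ Set.Icc u v, |R x| ≤ M₂ * (h^2/4) := by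
    intro x hx
    have h0 := taylor2_bound' (convex_Icc (0:ℝ) b) hfd hgd hM₂ hms (hIccs hx)
    have h1 : |x - m| ≤ h/2 := hdist x hx
    calc |R x| ≤ M₂ * |x-m| * |x-m| := h0
      _ = M₂ * (|x-m| * |x-m|) := by ring
      _ ≤ M₂ * ((h/2) * (h/2)) :=
          mul_le_mul_of_nonneg_left (mul_self_le_mul_self (abs_nonneg _) h1) hM₂0
      _ = M₂ * (h^2/4) := by ring
  have hfc : ContinuousOn f (Set.Icc (0:ℝ) b) := fun x hx => (hfd x hx).continuousWithinAt
  have hrint : IntervalIntegrable (fun x => x ^ β) volume u v :=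
    intervalIntegrable_rpow' (by linarith)
  have hsubuIcc : Set.uIcc u v ⊆ Set.Icc (0:ℝ) b := by
    rw [uIcc_of_le huv.le]; exact hIccs
  have i1 : IntervalIntegrable (fun x => x ^ β * f x) volume u v :=
    hrint.mul_continuousOn (hfc.mono hsubuIcc)
  have i2 : IntervalIntegrable (fun x => x ^ β * f m) volume u v := hrint.mul_const _
  have i3 : IntervalIntegrable (fun x => x ^ β * (g m * (x - m))) volume u v :=
    hrint.mul_continuousOn (Continuous.continuousOn (by continuity))
  have i4 : IntervalIntegrable (fun x => x ^ β * R x) volume u v := by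
    have e : (fun x => x ^ β * R x)
        = fun x => x ^ β * f x - x ^ β * f m - x ^ β * (g m * (x-m)) := by
      funext x; simp only [hRdef]; ring
    rw [e]; exact (i1.sub i2).sub i3
  have hdecomp : (∫ x in u..v, x ^ β * f x) - c * f m
      = (∫ x in u..v, x ^ β * (g m * (x - m))) + ∫ x in u..v, x ^ β * R x := by
    rw [← intervalIntegral.integral_add i3 i4]
    have h2 : c * f m = ∫ x in u..v, x ^ β * f m := by
      rw [hc, ← intervalIntegral.integral_mul_const]
    rw [h2, ← intervalIntegral.integral_sub i1 i2]
    apply intervalIntegral.integral_congr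
    intro x _
    simp only [hRdef]; ring
  have hA : |∫ x in u..v, x ^ β * R x| ≤ M₂ * (h^2/4) * c := by
    have hgint : IntervalIntegrable (fun t : ℝ => M₂ * (h^2/4) * t ^ β) volume u v :=
      hrint.const_mul _
    have hae : ∀ᵐ t ∂(volume.restrict (Ι u v)), ‖t ^ β * R t‖ ≤ M₂ * (h^2/4) * t ^ β := by
      refine (ae_restrict_iff' measurableSet_uIoc).mpr (Eventually.of_forall ?_)
      intro t ht
      rw [uIoc_of_le huv.le] at ht
      have ht' : t ∈ Set.Icc u v := Ioc_subset_Icc_self ht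
      have ht0 : (0:ℝ) < t := lt_of_le_of_lt hu0 ht.1
      rw [Real.norm_eq_abs, abs_mul, abs_of_nonneg (Real.rpow_nonneg ht0.le β)]
      calc t^β * |R t| ≤ t^β * (M₂*(h^2/4)) :=
            mul_le_mul_of_nonneg_left (hRb t ht') (Real.rpow_nonneg ht0.le β)
        _ = M₂*(h^2/4)*t^β := by ring
    have hle := intervalIntegral.norm_integral_le_abs_of_norm_le hae hgint
    rw [Real.norm_eq_abs] at hle
    refine hle.trans ?_
    rw [intervalIntegral.integral_const_mul, ← hc,
      abs_of_nonneg (mul_nonneg (by positivity) hcnn)]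
  have hJ : |∫ x in u..v, x ^ β * (g m * (x - m))|
      ≤ M₁ * (if n = 0 then h^(β+2)/(2*(β+1)) else |β| * h^(β+2) * (n:ℝ)^(β-1)/4) := by
    have e : (fun x : ℝ => x ^ β * (g m * (x - m))) = fun x => g m * (x ^ β * (x - m)) := by
      funext x; ring
    rw [e, intervalIntegral.integral_const_mul, abs_mul]
    refine mul_le_mul (hM₁ m hms) ?_ (abs_nonneg _) hM₁0
    have hpow3 : h^(β-1) * h^(3:ℕ) = h^(β+2) := by
      rw [← Real.rpow_natCast h 3, ← Real.rpow_add hh]; ring_nf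
    by_cases hn0 : n = 0
    · subst hn0
      simp only [if_pos]
      have hu' : u = 0 := by rw [hudef]; norm_num
      have hv' : v = h := by rw [hvdef]; norm_num
      have hgint : IntervalIntegrable (fun t : ℝ => (h/2) * t ^ β) volume u v :=
        hrint.const_mul _
      have hae : ∀ᵐ t ∂(volume.restrict (Ι u v)), ‖t ^ β * (t - m)‖ ≤ (h/2) * t ^ β := by
        refine (ae_restrict_iff' measurableSet_uIoc).mpr (Eventually.of_forall ?_)
        intro t ht
        rw [uIoc_of_le huv.le] at ht
        have ht' : t ∈ Set.Icc u v := Ioc_subset_Icc_self ht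
        have ht0 : (0:ℝ) < t := lt_of_le_of_lt hu0 ht.1
        rw [Real.norm_eq_abs, abs_mul, abs_of_nonneg (Real.rpow_nonneg ht0.le β)]
        calc t^β * |t - m| ≤ t^β * (h/2) :=
              mul_le_mul_of_nonneg_left (hdist t ht') (Real.rpow_nonneg ht0.le β)
          _ = (h/2) * t^β := by ring
      have hle := intervalIntegral.norm_integral_le_abs_of_norm_le hae hgint
      rw [Real.norm_eq_abs] at hle
      refine hle.trans ?_
      rw [intervalIntegral.integral_const_mul, ← hc,
        abs_of_nonneg (mul_nonneg (by positivity) hcnn)]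
      refine le_of_eq ?_
      rw [hcdef, hu', hv', Real.zero_rpow hβ1.ne',
        show β + 2 = (β+1) + 1 by ring, Real.rpow_add_one hh.ne']
      field_simp
      rw [Real.rpow_add_one hh.ne', Real.rpow_add_one hh.ne']
      ring
    · have hn1 : 1 ≤ n := Nat.one_le_iff_ne_zero.mpr hn0
      have hn1' : (1:ℝ) ≤ (n:ℝ) := by exact_mod_cast hn1
      have hu0' : 0 < u := by rw [hudef]; positivity
      simp only [if_neg hn0]
      have i5 : IntervalIntegrable (fun x => x ^ β * (x - m)) volume u v :=
        hrint.mul_continuousOn (Continuous.continuousOn (by continuity))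
      have i7 : IntervalIntegrable (fun x => m ^ β * (x - m)) volume u v :=
        (Continuous.intervalIntegrable (by continuity) u v)
      have i6 : IntervalIntegrable (fun x => (x ^ β - m ^ β) * (x - m)) volume u v := by
        have e6 : (fun x : ℝ => (x ^ β - m ^ β) * (x - m))
            = fun x => x ^ β * (x-m) - m ^ β * (x-m) := by funext x; ring
        rw [e6]; exact i5.sub i7
      have hzero : (∫ x in u..v, m ^ β * (x - m)) = 0 := by
        rw [intervalIntegral.integral_const_mul]
        have hz : (∫ x in u..v, (x - m)) = 0 := by
          have h1 := intervalIntegral.integral_sub (μ := volume) (a := u) (b := v)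
            (f := fun x : ℝ => x) (g := fun _ : ℝ => m)
            intervalIntegrable_id intervalIntegrable_const
          rw [h1, integral_id, intervalIntegral.integral_const, smul_eq_mul,
            hudef, hvdef, hmdef]
          ring
        rw [hz, mul_zero]
      have hJeq : (∫ x in u..v, x ^ β * (x - m)) = ∫ x in u..v, (x ^ β - m ^ β) * (x - m) := by
        calc (∫ x in u..v, x ^ β * (x - m))
            = ∫ x in u..v, ((x ^ β - m ^ β) * (x - m) + m ^ β * (x - m)) := by
              apply intervalIntegral.integral_congr; intro x _; ring
          _ = (∫ x in u..v, (x ^ β - m ^ β) * (x - m)) + ∫ x in u..v, m ^ β * (x - m) :=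
              intervalIntegral.integral_add i6 i7
          _ = ∫ x in u..v, (x ^ β - m ^ β) * (x - m) := by rw [hzero, add_zero]
      rw [hJeq]
      have hpw : ∀ x ∈ Set.uIoc u v,
          ‖(x ^ β - m ^ β) * (x - m)‖ ≤ |β| * u^(β-1) * (h/2) * (h/2) := by
        intro x hx
        rw [uIoc_of_le huv.le] at hx
        have hx' : x ∈ Set.Icc u v := Ioc_subset_Icc_self hx
        have hder : ∀ t ∈ Set.Icc u v,
            HasDerivWithinAt (fun z : ℝ => z ^ β) (β * t ^ (β-1)) (Set.Icc u v) t := by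
          intro t ht
          exact (Real.hasDerivAt_rpow_const
            (Or.inl (ne_of_gt (lt_of_lt_of_le hu0' ht.1)))).hasDerivWithinAt
        have hbd : ∀ t ∈ Set.Icc u v, ‖β * t ^ (β-1)‖ ≤ |β| * u^(β-1) := by
          intro t ht
          rw [Real.norm_eq_abs, abs_mul,
            abs_of_nonneg (Real.rpow_nonneg (le_of_lt (lt_of_lt_of_le hu0' ht.1)) _)]
          exact mul_le_mul_of_nonneg_left
            (Real.rpow_le_rpow_of_nonpos hu0' ht.1 (by linarith)) (abs_nonneg β)
        have hmvt := Convex.norm_image_sub_le_of_norm_hasDerivWithin_le hder hbd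
          (convex_Icc u v) hmuv hx'
        have h1 : |x ^ β - m ^ β| ≤ |β| * u^(β-1) * |x - m| := by
          simpa [Real.norm_eq_abs] using hmvt
        have h2 : |x - m| ≤ h/2 := hdist x hx'
        have hnn : 0 ≤ |β| * u^(β-1) := mul_nonneg (abs_nonneg _) (Real.rpow_nonneg hu0'.le _)
        rw [Real.norm_eq_abs, abs_mul]
        calc |x^β - m^β| * |x - m| ≤ (|β| * u^(β-1) * |x-m|) * |x-m| :=
              mul_le_mul_of_nonneg_right h1 (abs_nonneg _)
          _ = |β| * u^(β-1) * (|x-m| * |x-m|) := by ring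
          _ ≤ |β| * u^(β-1) * ((h/2)*(h/2)) :=
              mul_le_mul_of_nonneg_left (mul_self_le_mul_self (abs_nonneg _) h2) hnn
          _ = |β| * u^(β-1) * (h/2) * (h/2) := by ring
      have hle := intervalIntegral.norm_integral_le_of_norm_le_const hpw
      rw [Real.norm_eq_abs] at hle
      refine hle.trans (le_of_eq ?_)
      rw [(show |v - u| = h by rw [hvu, abs_of_nonneg hh.le])]
      have hu_eq : u ^ (β-1) = (n:ℝ)^(β-1) * h^(β-1) := by
        rw [hudef, Real.mul_rpow (Nat.cast_nonneg n) hh.le]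
      rw [hu_eq, ← hpow3]
      ring
  calc |(∫ x in u..v, x ^ β * f x) - c * f m|
      = |(∫ x in u..v, x ^ β * (g m * (x - m))) + ∫ x in u..v, x ^ β * R x| := by
        rw [hdecomp]
    _ ≤ |∫ x in u..v, x ^ β * (g m * (x - m))| + |∫ x in u..v, x ^ β * R x| := abs_add_le _ _
    _ ≤ M₁ * (if n = 0 then h^(β+2)/(2*(β+1)) else |β| * h^(β+2) * (n:ℝ)^(β-1)/4)
        + M₂ * (h^2/4) * c := add_le_add hJ hA
    _ = M₂ * (h^2/4) * c
        + M₁ * (if n = 0 then h^(β+2)/(2*(β+1)) else |β| * h^(β+2) * (n:ℝ)^(β-1)/4) := by ring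

/-- The modified midpoint quadrature error `E_N` for `∫_a^b x^β f(x) dx`, where the singular
factor `x^β` is integrated exactly on each subinterval and `f` is evaluated at midpoints:
here `h = (b-a)/N` and `x_t = a + t·h`. -/
noncomputable def midpointError (a b β : ℝ) (f : ℝ → ℝ) (N : ℕ) : ℝ :=
  (∫ x in a..b, x ^ β * f x) -
    ∑ n ∈ Finset.range N,
      ((a + ((n : ℝ) + 1) * ((b - a) / N)) ^ (β + 1) -
          (a + (n : ℝ) * ((b - a) / N)) ^ (β + 1)) / (β + 1) *
        f (a + ((n : ℝ) + 1 / 2) * ((b - a) / N))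

theorem stmt6 (b β : ℝ) (hb : 0 < b) (hβ : β ∈ Set.Ioo (-1 : ℝ) 0)
    (f : ℝ → ℝ) (hf : ContDiffOn ℝ 2 f (Set.Icc 0 b)) :
    ∃ K : ℝ, 0 < K ∧ ∀ N : ℕ, 1 ≤ N →
      |midpointError 0 b β f N| ≤ K / (N : ℝ) ^ (2 + β) := by
  obtain ⟨hβl, hβu⟩ := hβ
  have hβ1 : 0 < β + 1 := by linarith
  have husd : UniqueDiffOn ℝ (Set.Icc (0:ℝ) b) := uniqueDiffOn_Icc hb
  set g : ℝ → ℝ := derivWithin f (Set.Icc 0 b) with hgdef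
  set g2 : ℝ → ℝ := derivWithin g (Set.Icc 0 b) with hg2def
  have hfd : ∀ x ∈ Set.Icc (0:ℝ) b, HasDerivWithinAt f (g x) (Set.Icc 0 b) x := fun x hx =>
    ((hf.differentiableOn (by norm_num)) x hx).hasDerivWithinAt
  have hgc : ContDiffOn ℝ 1 g (Set.Icc (0:ℝ) b) := hf.derivWithin husd (by norm_num)
  have hgd : ∀ x ∈ Set.Icc (0:ℝ) b, HasDerivWithinAt g (g2 x) (Set.Icc 0 b) x := fun x hx =>
    ((hgc.differentiableOn (by norm_num)) x hx).hasDerivWithinAt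
  have hg2c : ContinuousOn g2 (Set.Icc (0:ℝ) b) := hgc.continuousOn_derivWithin husd (le_refl _)
  obtain ⟨M₁, hM₁0, hM₁⟩ : ∃ M, 0 ≤ M ∧ ∀ x ∈ Set.Icc (0:ℝ) b, |g x| ≤ M := by
    obtain ⟨M, hM⟩ := isCompact_Icc.exists_bound_of_continuousOn hgc.continuousOn
    exact ⟨max M 0, le_max_right _ _, fun x hx =>
      ((Real.norm_eq_abs _ ▸ hM x hx).trans (le_max_left _ _))⟩
  obtain ⟨M₂, hM₂0, hM₂⟩ : ∃ M, 0 ≤ M ∧ ∀ x ∈ Set.Icc (0:ℝ) b, |g2 x| ≤ M := by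
    obtain ⟨M, hM⟩ := isCompact_Icc.exists_bound_of_continuousOn hg2c
    exact ⟨max M 0, le_max_right _ _, fun x hx =>
      ((Real.norm_eq_abs _ ▸ hM x hx).trans (le_max_left _ _))⟩
  have hfc : ContinuousOn f (Set.Icc (0:ℝ) b) := hf.continuousOn
  have hSsum : Summable (fun n : ℕ => (n:ℝ) ^ (β - 1)) :=
    Real.summable_nat_rpow.mpr (by linarith)
  set S : ℝ := ∑' n : ℕ, (n:ℝ) ^ (β - 1) with hSdef
  have hS0 : 0 ≤ S := tsum_nonneg fun n => Real.rpow_nonneg (Nat.cast_nonneg n) _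
  have hbp : (0:ℝ) ≤ b ^ (β + 1) := Real.rpow_nonneg hb.le _
  have hbp2 : (0:ℝ) ≤ b ^ (β + 2) := Real.rpow_nonneg hb.le _
  set C1 : ℝ := M₂ * b ^ (β + 1) / (β + 1) * b ^ 2 / 4 with hC1def
  set C2 : ℝ := M₁ * b ^ (β + 2) * (1 / (2 * (β + 1)) + |β| * S / 4) with hC2def
  have hC1 : 0 ≤ C1 := by
    apply div_nonneg _ (by norm_num)
    exact mul_nonneg (div_nonneg (mul_nonneg hM₂0 hbp) hβ1.le) (pow_nonneg hb.le 2)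
  have hC2 : 0 ≤ C2 := by
    apply mul_nonneg (mul_nonneg hM₁0 hbp2)
    have h1 : (0:ℝ) ≤ |β| * S / 4 := by positivity
    have h2 : (0:ℝ) ≤ 1 / (2 * (β + 1)) := by positivity
    linarith
  refine ⟨C1 + C2 + 1, by linarith, ?_⟩
  intro N hN
  rw [show (2:ℝ) + β = β + 2 by ring]
  have hN0 : (0:ℝ) < N := by exact_mod_cast hN
  set h : ℝ := b / N with hhdef
  have hh : 0 < h := div_pos hb hN0
  set xn : ℕ → ℝ := fun n => n * h with hxndef
  have hxN : xn N = b := by simp only [hxndef, hhdef]; field_simp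
  have hxmem : ∀ n : ℕ, n ≤ N → xn n ∈ Set.Icc (0:ℝ) b := by
    intro n hn
    refine ⟨by positivity, ?_⟩
    calc (n:ℝ) * h ≤ N * h := by
          exact mul_le_mul_of_nonneg_right (by exact_mod_cast hn) hh.le
      _ = b := hxN
  have hrint : ∀ u v : ℝ, IntervalIntegrable (fun x => x ^ β) volume u v :=
    fun u v => intervalIntegrable_rpow' (by linarith)
  have hint : ∀ u v : ℝ, u ∈ Set.Icc (0:ℝ) b → v ∈ Set.Icc (0:ℝ) b →
      IntervalIntegrable (fun x => x ^ β * f x) volume u v := by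
    intro u v hu hv
    refine (hrint u v).mul_continuousOn (hfc.mono ?_)
    rw [← uIcc_of_le hb.le]
    exact uIcc_subset_uIcc (by rwa [uIcc_of_le hb.le]) (by rwa [uIcc_of_le hb.le])
  have hsplit : (∫ x in (0:ℝ)..b, x ^ β * f x)
      = ∑ n ∈ Finset.range N, ∫ x in xn n..xn (n+1), x ^ β * f x := by
    rw [intervalIntegral.sum_integral_adjacent_intervals
      (fun k hk => hint _ _ (hxmem k hk.le) (hxmem (k+1) hk))]
    rw [show xn 0 = 0 from by simp [hxndef], hxN]
  have hE : midpointError 0 b β f N = ∑ n ∈ Finset.range N,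
      ((∫ x in ((n:ℝ) * h)..(((n:ℝ)+1) * h), x ^ β * f x) -
        ((((n:ℝ)+1) * h) ^ (β+1) - ((n:ℝ) * h) ^ (β+1)) / (β+1)
          * f (((n:ℝ) + 1/2) * h)) := by
    rw [midpointError, hsplit, ← Finset.sum_sub_distrib]
    refine Finset.sum_congr rfl fun n _ => ?_
    simp only [zero_add, sub_zero, hxndef]
    rw [← hhdef]
    push_cast
    ring_nf
  have hkey : ∀ n ∈ Finset.range N,
      |(∫ x in ((n:ℝ) * h)..(((n:ℝ)+1) * h), x ^ β * f x) -
        ((((n:ℝ)+1) * h) ^ (β+1) - ((n:ℝ) * h) ^ (β+1)) / (β+1)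
          * f (((n:ℝ) + 1/2) * h)|
      ≤ M₂ * (h^2/4) * (((((n:ℝ)+1) * h) ^ (β+1) - ((n:ℝ) * h) ^ (β+1)) / (β+1))
        + M₁ * (if n = 0 then h^(β+2)/(2*(β+1)) else |β| * h^(β+2) * (n:ℝ)^(β-1)/4) := by
    intro n hn
    have hn' : n + 1 ≤ N := Finset.mem_range.mp hn
    have hv : ((n:ℝ)+1) * h ≤ b := by
      have := (hxmem (n+1) hn').2
      rw [hxndef] at this
      push_cast at this
      exact this
    exact key_bound b β h hb hβl hβu hh f g g2 hfd hgd M₁ M₂ hM₁ hM₂ n hv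
  have hsumc : ∑ n ∈ Finset.range N,
      (((((n:ℝ)+1) * h) ^ (β+1) - ((n:ℝ) * h) ^ (β+1)) / (β+1)) = b^(β+1)/(β+1) := by
    calc ∑ n ∈ Finset.range N, (((((n:ℝ)+1) * h) ^ (β+1) - ((n:ℝ) * h) ^ (β+1)) / (β+1))
        = ∑ n ∈ Finset.range N,
          ((((n+1:ℕ):ℝ) * h) ^ (β+1) / (β+1) - (((n:ℕ):ℝ) * h) ^ (β+1) / (β+1)) := by
          refine Finset.sum_congr rfl fun n _ => ?_
          push_cast
          rw [sub_div]
      _ = (((N:ℕ):ℝ) * h) ^ (β+1) / (β+1) - (((0:ℕ):ℝ) * h) ^ (β+1) / (β+1) :=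
          Finset.sum_range_sub (fun k => (((k:ℕ):ℝ) * h) ^ (β+1) / (β+1)) N
      _ = b^(β+1)/(β+1) := by
          rw [show ((N:ℕ):ℝ) * h = b from hxN]
          norm_num [Real.zero_rpow hβ1.ne']
  have hsumd : ∑ n ∈ Finset.range N,
      (if n = 0 then h^(β+2)/(2*(β+1)) else |β| * h^(β+2) * (n:ℝ)^(β-1)/4)
      ≤ h^(β+2) * (1/(2*(β+1)) + |β| * S/4) := by
    have hstep : ∀ n ∈ Finset.range N,
        (if n = 0 then h^(β+2)/(2*(β+1)) else |β| * h^(β+2) * (n:ℝ)^(β-1)/4)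
        = (if n = 0 then h^(β+2)/(2*(β+1)) else 0) + |β| * h^(β+2) * (n:ℝ)^(β-1)/4 := by
      intro n _
      by_cases hn0 : n = 0
      · simp [hn0, Real.zero_rpow (show β - 1 ≠ 0 by linarith)]
      · simp [hn0]
    rw [Finset.sum_congr rfl hstep, Finset.sum_add_distrib]
    have h1 : ∑ n ∈ Finset.range N, (if n = 0 then h^(β+2)/(2*(β+1)) else 0)
        = h^(β+2)/(2*(β+1)) := by
      rw [Finset.sum_ite_eq' (Finset.range N) 0 (fun _ => h^(β+2)/(2*(β+1)))]
      simp [Finset.mem_range, Nat.lt_of_lt_of_le Nat.zero_lt_one hN]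
    have hhp : (0:ℝ) ≤ h ^ (β+2) := Real.rpow_nonneg hh.le _
    have h2 : ∑ n ∈ Finset.range N, |β| * h^(β+2) * (n:ℝ)^(β-1)/4
        ≤ |β| * h^(β+2) * S / 4 := by
      have hle := Summable.sum_le_tsum (Finset.range N)
        (fun i _ => Real.rpow_nonneg (Nat.cast_nonneg i) (β-1)) hSsum
      calc ∑ n ∈ Finset.range N, |β| * h^(β+2) * (n:ℝ)^(β-1)/4
          = (|β| * h^(β+2)/4) * ∑ n ∈ Finset.range N, (n:ℝ)^(β-1) := by
            rw [Finset.mul_sum]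
            refine Finset.sum_congr rfl fun n _ => ?_
            ring
        _ ≤ (|β| * h^(β+2)/4) * S := by
            refine mul_le_mul_of_nonneg_left hle ?_
            exact div_nonneg (mul_nonneg (abs_nonneg _) hhp) (by norm_num)
        _ = |β| * h^(β+2) * S / 4 := by ring
    rw [h1]
    have he : h^(β+2) * (1/(2*(β+1)) + |β| * S/4)
        = h^(β+2)/(2*(β+1)) + |β| * h^(β+2) * S / 4 := by ring
    rw [he]
    linarith
  have hP : (0:ℝ) < (N:ℝ)^(β+2) := Real.rpow_pos_of_pos hN0 _
  have hhb : h^(β+2) = b^(β+2) / (N:ℝ)^(β+2) := by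
    rw [hhdef, Real.div_rpow hb.le (Nat.cast_nonneg N)]
  have hle2 : (N:ℝ)^(β+2) ≤ (N:ℝ)^(2:ℕ) := by
    have h2 := Real.rpow_le_rpow_of_exponent_le (by exact_mod_cast hN : (1:ℝ) ≤ N)
      (show β + 2 ≤ ((2:ℕ):ℝ) by push_cast; linarith)
    rwa [Real.rpow_natCast] at h2
  have hT1 : M₂ * (h^2/4) * (b^(β+1)/(β+1)) ≤ C1 / (N:ℝ)^(β+2) := by
    have e : M₂ * (h^2/4) * (b^(β+1)/(β+1)) = C1 / (N:ℝ)^(2:ℕ) := by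
      rw [hC1def, hhdef]
      field_simp
    rw [e]
    exact div_le_div_of_nonneg_left hC1 hP hle2
  have hT2 : M₁ * (h^(β+2) * (1/(2*(β+1)) + |β| * S/4)) = C2 / (N:ℝ)^(β+2) := by
    rw [hC2def, hhb]
    ring
  calc |midpointError 0 b β f N|
      = |∑ n ∈ Finset.range N,
          ((∫ x in ((n:ℝ) * h)..(((n:ℝ)+1) * h), x ^ β * f x) -
            ((((n:ℝ)+1) * h) ^ (β+1) - ((n:ℝ) * h) ^ (β+1)) / (β+1)
              * f (((n:ℝ) + 1/2) * h))| := by rw [hE]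
    _ ≤ ∑ n ∈ Finset.range N,
          |(∫ x in ((n:ℝ) * h)..(((n:ℝ)+1) * h), x ^ β * f x) -
            ((((n:ℝ)+1) * h) ^ (β+1) - ((n:ℝ) * h) ^ (β+1)) / (β+1)
              * f (((n:ℝ) + 1/2) * h)| := Finset.abs_sum_le_sum_abs _ _
    _ ≤ ∑ n ∈ Finset.range N,
          (M₂ * (h^2/4) * (((((n:ℝ)+1) * h) ^ (β+1) - ((n:ℝ) * h) ^ (β+1)) / (β+1))
            + M₁ * (if n = 0 then h^(β+2)/(2*(β+1)) else |β| * h^(β+2) * (n:ℝ)^(β-1)/4)) :=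
        Finset.sum_le_sum hkey
    _ = M₂ * (h^2/4) * (∑ n ∈ Finset.range N,
          (((((n:ℝ)+1) * h) ^ (β+1) - ((n:ℝ) * h) ^ (β+1)) / (β+1)))
        + M₁ * (∑ n ∈ Finset.range N,
          (if n = 0 then h^(β+2)/(2*(β+1)) else |β| * h^(β+2) * (n:ℝ)^(β-1)/4)) := by
        rw [Finset.sum_add_distrib, ← Finset.mul_sum, ← Finset.mul_sum]
    _ ≤ M₂ * (h^2/4) * (b^(β+1)/(β+1))
        + M₁ * (h^(β+2) * (1/(2*(β+1)) + |β| * S/4)) := by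
        rw [hsumc]
        exact add_le_add_right (mul_le_mul_of_nonneg_left hsumd hM₁0) _
    _ ≤ C1 / (N:ℝ)^(β+2) + C2 / (N:ℝ)^(β+2) := add_le_add hT1 (le_of_eq hT2)
    _ ≤ (C1 + C2 + 1) / (N:ℝ)^(β+2) := by
        rw [← add_div]
        exact (div_le_div_iff_of_pos_right hP).mpr (by linarith)
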